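/- Let G = cr(K_m, s) for m ≥ 3 and s ≥ 2. Then δ(J(G)) = m(s+1)/2, i.e., for every independent set S of G such that G\N[S] has no bipartite connected component, we have |N(S)| ≤ |S|, with the maximum value of |N(S)| − |S| over such S being 0. -/

import Mathlib

/-- The generalized corona `cr(K_m, s)`: the complete graph on `Fin m`
(vertices `Sum.inl i`) with `s` pendant vertices `Sum.inr (i, t)` attached to
each vertex `i` of `K_m`. -/
def coronaK (m s : ℕ) : SimpleGraph (Fin m ⊕ Fin m × Fin s) where
  Adj u v :=
    match u, v with
    | Sum.inl i, Sum.inl j => i ≠ j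
    | Sum.inl i, Sum.inr p => i = p.1
    | Sum.inr p, Sum.inl j => p.1 = j
    | Sum.inr _, Sum.inr _ => False
  symm := by
    constructor
    rintro (i | p) (j | q) h
    · exact h.symm
    · exact h.symm
    · exact h.symm
    · exact h.elim
  loopless := by
    constructor
    rintro (i | p) h
    · exact h rfl
    · exact h

/-- The (open) neighbourhood of a set of vertices. -/
def nbhdSet {V : Type*} (G : SimpleGraph V) (S : Set V) : Set V :=
  {v | v ∉ S ∧ ∃ u ∈ S, G.Adj u v}

/-- `S` is an independent set of `G`. -/
def indepSet {V : Type*} (G : SimpleGraph V) (S : Set V) : Prop :=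
  ∀ u ∈ S, ∀ v ∈ S, ¬ G.Adj u v

/-- The connected component of `v` in `H` is bipartite (one-vertex components
count as bipartite). -/
def componentBipartite {W : Type*} (H : SimpleGraph W) (v : W) : Prop :=
  ∃ c : W → Bool, ∀ u w, H.Reachable v u → H.Reachable v w → H.Adj u w → c u ≠ c w

/-- The induced subgraph of `G` on the complement of `N[S]` has no bipartite
connected component. -/
def noBipartiteCompOutsideClosedNbhd {V : Type*} (G : SimpleGraph V) (S : Set V) : Prop :=
  ∀ v : ((S ∪ nbhdSet G S)ᶜ : Set V),
    ¬ componentBipartite (G.induce ((S ∪ nbhdSet G S)ᶜ)) v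

lemma reach_eq_of_isolated {W : Type*} (H : SimpleGraph W) {v u : W}
    (hv : ∀ w, ¬ H.Adj v w) (h : H.Reachable v u) : u = v := by
  obtain ⟨w⟩ := h
  cases w with
  | nil => rfl
  | cons h p => exact absurd h (hv _)

lemma isolated_componentBipartite {W : Type*} (H : SimpleGraph W) (v : W)
    (hv : ∀ w, ¬ H.Adj v w) : componentBipartite H v := by
  refine ⟨fun _ => true, fun u w hu hw hadj => ?_⟩
  rw [reach_eq_of_isolated H hv hu, reach_eq_of_isolated H hv hw] at hadj
  exact absurd hadj (H.loopless.irrefl v)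

open Classical in
/-- auxiliary injection for the case `Sum.inl i ∈ S`. -/
noncomputable def caseAfun (m s : ℕ) (hs : 0 < s) (i j0 : Fin m) :
    (Fin m ⊕ Fin m × Fin s) → (Fin m ⊕ Fin m × Fin s)
  | Sum.inl j => Sum.inr (j, ⟨0, hs⟩)
  | Sum.inr (_, t) => if t = ⟨0, hs⟩ then Sum.inl i else Sum.inr (j0, t)

open Classical in
/-- auxiliary injection for the case with no `Sum.inl` vertex in `S`. -/
noncomputable def caseBfun (m s : ℕ) (S : Set (Fin m ⊕ Fin m × Fin s)) :
    (Fin m ⊕ Fin m × Fin s) → (Fin m ⊕ Fin m × Fin s)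
  | Sum.inl j => if h : ∃ t, Sum.inr (j, t) ∈ S then Sum.inr (j, h.choose) else Sum.inl j
  | Sum.inr p => Sum.inr p

/-- for `G = cr(K_m, s)` with `m ≥ 3`, `s ≥ 2`, one has
`δ(J(G)) = m(s+1)/2`; i.e. for every independent set `S` of `G` such that
`G \ N[S]` has no bipartite component, `|N(S)| ≤ |S|`, and the maximum of
`|N(S)| − |S|` over such `S` is `0` (attained). -/
theorem delta_coverIdeal_coronaK
    (m s : ℕ) (hm : 3 ≤ m) (hs : 2 ≤ s) :
    IsGreatest {x : ℤ | ∃ S : Set (Fin m ⊕ Fin m × Fin s),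
        indepSet (coronaK m s) S ∧ noBipartiteCompOutsideClosedNbhd (coronaK m s) S ∧
        x = ((nbhdSet (coronaK m s) S).ncard : ℤ) - (S.ncard : ℤ)}
      0 := by
  classical
  set V := Fin m ⊕ Fin m × Fin s
  set G := coronaK m s with hG
  constructor
  · -- membership: S = ∅
    refine ⟨∅, fun u hu => hu.elim, ?_, ?_⟩
    · -- no bipartite component in the whole graph
      intro v hbip
      obtain ⟨c, hc⟩ := hbip
      have memall : ∀ w : V, w ∈ ((∅ ∪ nbhdSet G ∅)ᶜ : Set V) := by
        intro w; simp [nbhdSet]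
      have key : ∀ (k : Fin m) (u : ((∅ ∪ nbhdSet G ∅)ᶜ : Set V)),
          (G.induce ((∅ ∪ nbhdSet G ∅)ᶜ)).Reachable u ⟨Sum.inl k, memall _⟩ := by
        intro k u
        have hub : ∀ j : Fin m,
            (G.induce ((∅ ∪ nbhdSet G ∅)ᶜ)).Reachable ⟨Sum.inl j, memall _⟩
              ⟨Sum.inl k, memall _⟩ := by
          intro j
          by_cases hjk : j = k
          · subst hjk; exact SimpleGraph.Reachable.refl _
          · exact SimpleGraph.Adj.reachable (by exact hjk)
        obtain ⟨(j | ⟨j, t⟩), hu⟩ := u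
        · exact hub j
        · refine (SimpleGraph.Adj.reachable ?_).trans (hub j)
          show (j, t).1 = j
          rfl
      have hne01 : ((⟨0, by omega⟩ : Fin m)) ≠ ⟨1, by omega⟩ := Fin.ne_of_val_ne (by norm_num)
      have hne12 : ((⟨1, by omega⟩ : Fin m)) ≠ ⟨2, by omega⟩ := Fin.ne_of_val_ne (by norm_num)
      have hne02 : ((⟨0, by omega⟩ : Fin m)) ≠ ⟨2, by omega⟩ := Fin.ne_of_val_ne (by norm_num)
      have h1 := hc ⟨Sum.inl ⟨0, by omega⟩, memall _⟩ ⟨Sum.inl ⟨1, by omega⟩, memall _⟩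
        (key _ v) (key _ v) hne01
      have h2 := hc ⟨Sum.inl ⟨1, by omega⟩, memall _⟩ ⟨Sum.inl ⟨2, by omega⟩, memall _⟩
        (key _ v) (key _ v) hne12
      have h3 := hc ⟨Sum.inl ⟨0, by omega⟩, memall _⟩ ⟨Sum.inl ⟨2, by omega⟩, memall _⟩
        (key _ v) (key _ v) hne02
      have triv : ∀ x y z : Bool, x ≠ y → y ≠ z → x ≠ z → False := by decide
      exact triv _ _ _ h1 h2 h3
    · have hempty : nbhdSet G ∅ = (∅ : Set V) := by ext v; simp [nbhdSet]
      simp [hempty]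
  · -- upper bound
    rintro x ⟨S, hind, hnb, rfl⟩
    have hs0 : 0 < s := by omega
    suffices hle : (nbhdSet G S).ncard ≤ S.ncard by omega
    by_cases hA : ∃ i, Sum.inl i ∈ S
    · -- Case A : some hub vertex belongs to S
      obtain ⟨i, hi⟩ := hA
      have step1 : ∀ j, j ≠ i → Sum.inl j ∉ S := by
        intro j hj hjS
        exact hind _ hi _ hjS (Ne.symm hj)
      have step2 : ∀ t, Sum.inr (i, t) ∉ S := by
        intro t ht
        exact hind _ hi _ ht rfl
      have step3 : ∀ j, j ≠ i → ∀ t : Fin s, Sum.inr (j, t) ∈ S := by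
        intro j hj t
        by_contra hvnS
        have hvN : Sum.inr (j, t) ∉ nbhdSet G S := by
          rintro ⟨-, u, huS, hadj⟩
          rcases u with k | q
          · have hk : k = j := hadj
            exact step1 j hj (hk ▸ huS)
          · exact hadj
        have hmem : Sum.inr (j, t) ∈ ((S ∪ nbhdSet G S)ᶜ : Set V) := by
          intro h
          rcases h with h | h
          · exact hvnS h
          · exact hvN h
        apply hnb ⟨_, hmem⟩
        apply isolated_componentBipartite
        rintro ⟨w, hw⟩ hadj
        rcases w with k | q
        · have hk : j = k := hadj
          subst hk
          exact hw (Or.inr ⟨step1 j hj, Sum.inl i, hi, Ne.symm hj⟩)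
        · exact hadj
      -- choose j0 ≠ i
      have hj0 : ∃ j0 : Fin m, j0 ≠ i := by
        by_cases h0 : i = ⟨0, by omega⟩
        · exact ⟨⟨1, by omega⟩, by subst h0; exact Fin.ne_of_val_ne (by norm_num)⟩
        · exact ⟨⟨0, by omega⟩, fun h => h0 h.symm⟩
      obtain ⟨j0, hj0⟩ := hj0
      apply Set.ncard_le_ncard_of_injOn (caseAfun m s hs0 i j0)
      · -- maps N(S) into S
        rintro (j | ⟨a, t⟩) hv
        · have hji : j ≠ i := fun h => hv.1 (h ▸ hi)
          exact step3 j hji _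
        · have hai : a = i := by
            by_contra hne
            exact hv.1 (step3 a hne t)
          show (if t = ⟨0, hs0⟩ then Sum.inl i else Sum.inr (j0, t)) ∈ S
          by_cases ht : t = ⟨0, hs0⟩
          · rw [if_pos ht]; exact hi
          · rw [if_neg ht]; exact step3 j0 hj0 t
      · -- injective on N(S)
        rintro (j | ⟨a, t⟩) hu (k | ⟨b, r⟩) hv huv
        · have : j = k := by
            simpa [caseAfun] using huv
          rw [this]
        · exfalso
          by_cases hr : r = ⟨0, hs0⟩ <;> simp [caseAfun, hr] at huv
          all_goals exact hr huv.2.symm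
        · exfalso
          by_cases ht : t = ⟨0, hs0⟩ <;> simp [caseAfun, ht] at huv
          all_goals exact ht huv.2
        · have hai : a = i := by
            by_contra hne; exact hu.1 (step3 a hne t)
          have hbi : b = i := by
            by_contra hne; exact hv.1 (step3 b hne r)
          subst hai; subst hbi
          by_cases ht : t = ⟨0, hs0⟩ <;> by_cases hr : r = ⟨0, hs0⟩ <;>
            simp [caseAfun, ht, hr] at huv ⊢
          all_goals simp_all
    · -- Case B : no hub vertex in S
      push_neg at hA
      have hpend : ∀ (a : Fin m) (t : Fin s), Sum.inr (a, t) ∉ nbhdSet G S := by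
        rintro a t ⟨-, u, huS, hadj⟩
        rcases u with k | q
        · have hk : k = a := hadj
          exact hA a (hk ▸ huS)
        · exact hadj
      apply Set.ncard_le_ncard_of_injOn (caseBfun m s S)
      · rintro (j | ⟨a, t⟩) hv
        · obtain ⟨hvS, u, huS, hadj⟩ := hv
          rcases u with k | ⟨b, r⟩
          · exact absurd huS (hA k)
          · have hb : b = j := hadj
            subst hb
            have h : ∃ t : Fin s, Sum.inr (b, t) ∈ S := ⟨r, huS⟩
            show (if h : ∃ t : Fin s, Sum.inr (b, t) ∈ S then Sum.inr (b, h.choose)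
              else Sum.inl b) ∈ S
            rw [dif_pos h]
            exact h.choose_spec
        · exact absurd hv (hpend a t)
      · rintro u hu v hv huv
        rcases u with j | ⟨a, t⟩
        swap
        · exact absurd hu (hpend a t)
        rcases v with k | ⟨b, r⟩
        swap
        · exact absurd hv (hpend b r)
        have hj : ∃ t : Fin s, Sum.inr (j, t) ∈ S := by
          obtain ⟨hvS, u, huS, hadj⟩ := hu
          rcases u with k' | ⟨b', r'⟩
          · exact absurd huS (hA k')
          · have hb : b' = j := hadj
            exact ⟨r', hb ▸ huS⟩
        have hk : ∃ t : Fin s, Sum.inr (k, t) ∈ S := by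
          obtain ⟨hvS, u, huS, hadj⟩ := hv
          rcases u with k' | ⟨b', r'⟩
          · exact absurd huS (hA k')
          · have hb : b' = k := hadj
            exact ⟨r', hb ▸ huS⟩
        have hfj : caseBfun m s S (Sum.inl j) = Sum.inr (j, hj.choose) := by
          simp [caseBfun, dif_pos hj]
        have hfk : caseBfun m s S (Sum.inl k) = Sum.inr (k, hk.choose) := by
          simp [caseBfun, dif_pos hk]
        rw [hfj, hfk] at huv
        simp only [Sum.inr.injEq, Prod.mk.injEq] at huv
        rw [huv.1]
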